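/- (Suboptimality-gap decomposition, Δ₁ bound.) Let ρ* maximize E_{τ∼ρ}[r(τ)] over distributions ρ on a finite set Y, and let ρ_BL be the Gibbs distribution ρ_sft(y)·exp(r(y)/β)/Z. Then max_ρ E_{τ∼ρ}[r(τ)] − E_{τ∼ρ_BL}[r(τ)] ≤ β·KL(ρ* ‖ ρ_sft), where ρ* is any maximizer of the unregularized expected reward. -/
import Mathlib


open Real Finset

/-- KL divergence between finite pmfs. -/
noncomputable def KLdiv {Y : Type*} [Fintype Y] (p q : Y → ℝ) : ℝ :=
  ∑ y, p y * Real.log (p y / q y)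

lemma aux_log (a b : ℝ) (ha : 0 < a) (hb : 0 < b) :
    b * Real.log (a / b) ≤ a - b := by
  have h := Real.log_le_sub_one_of_pos (div_pos ha hb)
  have : b * Real.log (a / b) ≤ b * (a / b - 1) := by
    exact mul_le_mul_of_nonneg_left h hb.le
  calc b * Real.log (a / b) ≤ b * (a / b - 1) := this
    _ = a - b := by field_simp

/-- Δ₁ bound: with `ρ*` any maximizer of the unregularized expected reward and
`ρ_BL` the Gibbs distribution, `max_ρ E_ρ[r] − E_{ρ_BL}[r] ≤ β · KL(ρ* ‖ ρ_sft)`.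
(The maximum of the expected reward over pmfs is attained by `ρ*`.) -/
theorem stmt5_delta1_gibbs_bound
    {Y : Type*} [Fintype Y] [Nonempty Y]
    (rhosft : Y → ℝ) (hpos : ∀ y, 0 < rhosft y) (hsum : ∑ y, rhosft y = 1)
    (r : Y → ℝ) (β : ℝ) (hβ : 0 < β)
    (Z : ℝ) (hZ : Z = ∑ y, rhosft y * Real.exp (r y / β))
    (rhoBL : Y → ℝ) (hBL : ∀ y, rhoBL y = rhosft y * Real.exp (r y / β) / Z)
    (rhostar : Y → ℝ) (hstarnn : ∀ y, 0 ≤ rhostar y) (hstarsum : ∑ y, rhostar y = 1)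
    (hstaropt : ∀ rho : Y → ℝ, (∀ y, 0 ≤ rho y) → (∑ y, rho y = 1) →
        (∑ y, rho y * r y) ≤ ∑ y, rhostar y * r y) :
    (∑ y, rhostar y * r y) - (∑ y, rhoBL y * r y) ≤ β * KLdiv rhostar rhosft := by
  have hZpos : 0 < Z := by
    rw [hZ]
    exact Finset.sum_pos (fun y _ => mul_pos (hpos y) (Real.exp_pos _)) univ_nonempty
  have hBLpos : ∀ y, 0 < rhoBL y := fun y => by
    rw [hBL y]; exact div_pos (mul_pos (hpos y) (Real.exp_pos _)) hZpos
  have hBLsum : ∑ y, rhoBL y = 1 := by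
    simp only [hBL, div_eq_mul_inv, ← Finset.sum_mul, ← hZ]
    field_simp
    exact hZ.symm
  have hlogBL : ∀ y, Real.log (rhoBL y) =
      Real.log (rhosft y) + r y / β - Real.log Z := by
    intro y
    rw [hBL y, Real.log_div (mul_pos (hpos y) (Real.exp_pos _)).ne' hZpos.ne',
      Real.log_mul (hpos y).ne' (Real.exp_pos _).ne', Real.log_exp]
  -- Step A: ∑ ρ* r ≤ β KL(ρ*‖ρ_sft) + β log Z
  have stepA : (∑ y, rhostar y * r y) ≤ β * KLdiv rhostar rhosft + β * Real.log Z := by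
    have pt : ∀ y, rhostar y * r y ≤
        β * (rhostar y * Real.log (rhostar y / rhosft y))
          + β * Real.log Z * rhostar y + β * (rhoBL y - rhostar y) := by
      intro y
      rcases eq_or_lt_of_le (hstarnn y) with h0 | hp
      · rw [← h0]
        simp only [zero_mul, mul_zero, sub_zero]
        nlinarith [hBLpos y, hβ]
      · have key := aux_log (rhoBL y) (rhostar y) (hBLpos y) hp
        rw [Real.log_div (hBLpos y).ne' hp.ne', hlogBL y] at key
        have hlogpq : Real.log (rhostar y / rhosft y)
            = Real.log (rhostar y) - Real.log (rhosft y) :=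
          Real.log_div hp.ne' (hpos y).ne'
        rw [hlogpq]
        have hβr : β * (r y / β) = r y := by field_simp
        nlinarith [mul_le_mul_of_nonneg_left key hβ.le, hp.le]
    calc (∑ y, rhostar y * r y) ≤ ∑ y, (β * (rhostar y * Real.log (rhostar y / rhosft y))
          + β * Real.log Z * rhostar y + β * (rhoBL y - rhostar y)) :=
        Finset.sum_le_sum (fun y _ => pt y)
      _ = β * KLdiv rhostar rhosft + β * Real.log Z := by
        rw [Finset.sum_add_distrib, Finset.sum_add_distrib, ← Finset.mul_sum,
          ← Finset.mul_sum, ← Finset.mul_sum, Finset.sum_sub_distrib,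
          hstarsum, hBLsum, KLdiv]
        ring
  -- Step B: β log Z ≤ ∑ ρ_BL r
  have stepB : β * Real.log Z ≤ ∑ y, rhoBL y * r y := by
    have pt : ∀ y, rhoBL y * Real.log Z - rhoBL y * (r y / β) ≤ rhosft y - rhoBL y := by
      intro y
      have key := aux_log (rhosft y) (rhoBL y) (hpos y) (hBLpos y)
      rw [Real.log_div (hpos y).ne' (hBLpos y).ne', hlogBL y] at key
      nlinarith [key]
    have hs : ∑ y, (rhoBL y * Real.log Z - rhoBL y * (r y / β)) ≤
        ∑ y, (rhosft y - rhoBL y) := Finset.sum_le_sum (fun y _ => pt y)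
    rw [Finset.sum_sub_distrib, Finset.sum_sub_distrib, hsum, hBLsum,
      ← Finset.sum_mul] at hs
    have hs' : (∑ y, rhoBL y * Real.log Z) - (∑ y, rhoBL y * (r y / β)) ≤ 0 := by
      rw [← Finset.sum_mul]; linarith [hs]
    rw [← Finset.sum_mul, hBLsum, one_mul] at hs'
    have : Real.log Z ≤ ∑ y, rhoBL y * (r y / β) := by linarith
    calc β * Real.log Z ≤ β * ∑ y, rhoBL y * (r y / β) :=
        mul_le_mul_of_nonneg_left this hβ.le
      _ = ∑ y, rhoBL y * r y := by
        rw [Finset.mul_sum]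
        congr 1; ext y; field_simp
  linarith
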